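/- Uhlmann achievability of the fidelity: Let ρ, σ be density matrices on ℂ^n. Then there exist unit vectors ψ, φ ∈ ℂ^(n·n), indexed by Fin n × Fin n, which purify ρ and σ respectively (i.e. ∑_{b} ψ(a,b)·conj(ψ(a',b)) = ρ_{a,a'} and ∑_{b} φ(a,b)·conj(φ(a',b)) = σ_{a,a'} for all a, a'), such that |⟨ψ, φ⟩| = Tr(√(√ρ · σ · √ρ)). -/

import Mathlib

open Matrix
open scoped ComplexOrder

/-- The positive semidefinite square root `U √D U*` (the definition of the older Mathlib). -/
noncomputable def Matrix.PosSemidef.sqrt {n : ℕ} {a : Matrix (Fin n) (Fin n) ℂ} (hA : a.PosSemidef) :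
    Matrix (Fin n) (Fin n) ℂ :=
  (hA.1.eigenvectorUnitary : Matrix (Fin n) (Fin n) ℂ) *
    diagonal (((↑) : ℝ → ℂ) ∘ (√·) ∘ hA.1.eigenvalues) *
    (star (hA.1.eigenvectorUnitary : Matrix (Fin n) (Fin n) ℂ))

/-- `√a * b * √a` is positive semidefinite whenever `a` and `b` are. -/
lemma sqrt_mul_mul_sqrt_posSemidef {n : ℕ} {a b : Matrix (Fin n) (Fin n) ℂ}
    (ha : a.PosSemidef) (hb : b.PosSemidef) :
    (ha.sqrt * b * ha.sqrt).PosSemidef := by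
  have h := hb.mul_mul_conjTranspose_same ha.sqrt
  have hs : ha.sqrtᴴ = ha.sqrt := by
    simp only [Matrix.PosSemidef.sqrt, conjTranspose_mul, diagonal_conjTranspose,
      Matrix.mul_assoc, star_eq_conjTranspose, conjTranspose_conjTranspose]
    congr 2
    ext i j
    simp [diagonal_apply]
  rwa [hs] at h

/-- The fidelity `F(a, b) = Tr(√(√a · b · √a))` of two positive semidefinite matrices. -/
noncomputable def fidelity {n : ℕ} {a b : Matrix (Fin n) (Fin n) ℂ}
    (ha : a.PosSemidef) (hb : b.PosSemidef) : ℝ :=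
  ((sqrt_mul_mul_sqrt_posSemidef ha hb).sqrt.trace).re

namespace Matrix.PosSemidef

lemma sqrt_eq_cfc {n : ℕ} {a : Matrix (Fin n) (Fin n) ℂ} (hA : a.PosSemidef) :
    hA.sqrt = cfc Real.sqrt a := by
  rw [hA.1.cfc_eq]; rfl

lemma spectrum_nonneg' {n : ℕ} {a : Matrix (Fin n) (Fin n) ℂ} (hA : a.PosSemidef) :
    ∀ x ∈ spectrum ℝ a, 0 ≤ x := by
  intro x hx
  rw [hA.1.spectrum_real_eq_range_eigenvalues] at hx
  obtain ⟨i, rfl⟩ := hx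
  exact hA.eigenvalues_nonneg i

lemma posSemidef_sqrt {n : ℕ} {a : Matrix (Fin n) (Fin n) ℂ} (hA : a.PosSemidef) :
    hA.sqrt.PosSemidef := by
  have hD : (diagonal (((↑) : ℝ → ℂ) ∘ (√·) ∘ hA.1.eigenvalues)).PosSemidef :=
    posSemidef_diagonal_iff.mpr fun i => by
      simp [Complex.zero_le_real.mpr (Real.sqrt_nonneg _)]
  have h := hD.mul_mul_conjTranspose_same (hA.1.eigenvectorUnitary : Matrix (Fin n) (Fin n) ℂ)
  unfold Matrix.PosSemidef.sqrt
  rw [star_eq_conjTranspose]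
  exact h

lemma sqrt_mul_self {n : ℕ} {a : Matrix (Fin n) (Fin n) ℂ} (hA : a.PosSemidef) :
    hA.sqrt * hA.sqrt = a := by
  rw [sqrt_eq_cfc, ← cfc_mul Real.sqrt Real.sqrt a]
  exact (cfc_congr (f := fun x => Real.sqrt x * Real.sqrt x) (g := id)
    (fun x hx => Real.mul_self_sqrt (spectrum_nonneg' hA x hx))).trans
    (cfc_id ℝ a hA.1.isSelfAdjoint)

lemma eq_sqrt_of_sq_eq {n : ℕ} {A B : Matrix (Fin n) (Fin n) ℂ} (hA : A.PosSemidef)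
    (hB : B.PosSemidef) (h : A ^ 2 = B) : A = hB.sqrt := by
  rw [sqrt_eq_cfc hB, ← h, ← cfc_pow_id (R := ℝ) A 2 hA.1.isSelfAdjoint,
    ← cfc_comp Real.sqrt (· ^ 2) A hA.1.isSelfAdjoint]
  exact ((cfc_congr (f := Real.sqrt ∘ (· ^ 2)) (g := id) (fun x hx => by
    simp [Real.sqrt_sq (spectrum_nonneg' hA x hx)])).trans (cfc_id ℝ A hA.1.isSelfAdjoint)).symm

end Matrix.PosSemidef

/-- Polar decomposition: every square complex matrix `A` factors as a unitary
times `√(Aᴴ * A)`. -/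
lemma exists_unitary_polar {n : ℕ} (A : Matrix (Fin n) (Fin n) ℂ) :
    ∃ U ∈ Matrix.unitaryGroup (Fin n) ℂ,
      A = U * (Matrix.posSemidef_conjTranspose_mul_self A).sqrt := by
  classical
  have hH : (Aᴴ * A).PosSemidef := Matrix.posSemidef_conjTranspose_mul_self A
  have hHer : (Aᴴ * A).IsHermitian := hH.1
  set V : Matrix (Fin n) (Fin n) ℂ := (hHer.eigenvectorUnitary : Matrix (Fin n) (Fin n) ℂ)
    with hVdef
  have hVmem : V ∈ Matrix.unitaryGroup (Fin n) ℂ := hHer.eigenvectorUnitary.2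
  have hVV : V * star V = 1 := (Matrix.mem_unitaryGroup_iff).mp hVmem
  have hVV' : star V * V = 1 := (Matrix.mem_unitaryGroup_iff').mp hVmem
  set d : Fin n → ℝ := hHer.eigenvalues with hddef
  have hdnn : ∀ i, 0 ≤ d i := hH.eigenvalues_nonneg
  have hspec : Aᴴ * A = V * diagonal (RCLike.ofReal ∘ d) * star V := hHer.spectral_theorem
  set P : Matrix (Fin n) (Fin n) ℂ :=
    V * diagonal ((↑) ∘ Real.sqrt ∘ d) * star V with hPdef
  have hPps : P.PosSemidef := by
    have hD : (diagonal ((↑) ∘ Real.sqrt ∘ d) : Matrix (Fin n) (Fin n) ℂ).PosSemidef :=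
      Matrix.posSemidef_diagonal_iff.mpr fun i => by
        simp [Complex.zero_le_real.mpr (Real.sqrt_nonneg (d i))]
    have h := hD.mul_mul_conjTranspose_same V
    rw [hPdef, Matrix.star_eq_conjTranspose]
    exact h
  have hdiag : diagonal ((↑) ∘ Real.sqrt ∘ d) * diagonal ((↑) ∘ Real.sqrt ∘ d)
      = (diagonal (RCLike.ofReal ∘ d) : Matrix (Fin n) (Fin n) ℂ) := by
    rw [diagonal_mul_diagonal]
    ext i j
    rcases eq_or_ne i j with rfl | hij
    · simp only [diagonal_apply_eq, Function.comp_apply, Pi.mul_apply]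
      show ((Real.sqrt (d i) : ℂ)) * ((Real.sqrt (d i) : ℂ)) = ((d i : ℝ) : ℂ)
      rw [← Complex.ofReal_mul, Real.mul_self_sqrt (hdnn i)]
    · simp [diagonal_apply_ne _ hij]
  have hPsq : P ^ 2 = Aᴴ * A := by
    have key : P * P = V * diagonal ((↑) ∘ Real.sqrt ∘ d) * (star V * V)
        * (diagonal ((↑) ∘ Real.sqrt ∘ d) * star V) := by
      simp only [hPdef, Matrix.mul_assoc]
    rw [pow_two, key, hVV', Matrix.mul_one]
    have h3 : V * diagonal ((↑) ∘ Real.sqrt ∘ d) * (diagonal ((↑) ∘ Real.sqrt ∘ d) * star V)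
        = V * (diagonal ((↑) ∘ Real.sqrt ∘ d) * diagonal ((↑) ∘ Real.sqrt ∘ d)) * star V := by
      simp only [Matrix.mul_assoc]
    rw [h3, hdiag]
    exact hspec.symm
  set B : Matrix (Fin n) (Fin n) ℂ := A * V with hBdef
  have hBB : Bᴴ * B = diagonal (RCLike.ofReal ∘ d) := by
    have h1 : Bᴴ * B = star V * ((Aᴴ * A) * V) := by
      rw [hBdef, conjTranspose_mul, Matrix.star_eq_conjTranspose]
      simp only [Matrix.mul_assoc]
    rw [h1, hspec]
    simp only [Matrix.mul_assoc]
    rw [hVV', Matrix.mul_one, ← Matrix.mul_assoc, hVV', Matrix.one_mul]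
  -- column vectors, normalized on the support of `d`
  set u : Fin n → EuclideanSpace ℂ (Fin n) :=
    fun i => (WithLp.equiv 2 (Fin n → ℂ)).symm (fun a => ((Real.sqrt (d i) : ℂ))⁻¹ * B a i)
    with hudef
  have hinner : ∀ i j, (inner ℂ (u i) (u j) : ℂ)
      = ((Real.sqrt (d i) : ℂ))⁻¹ * ((Real.sqrt (d j) : ℂ))⁻¹
        * (if i = j then (d i : ℂ) else 0) := by
    intro i j
    have hentry : (Bᴴ * B) i j = if i = j then (d i : ℂ) else 0 := by
      rw [hBB]
      rcases eq_or_ne i j with rfl | hij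
      · rw [diagonal_apply_eq, if_pos rfl]; rfl
      · rw [diagonal_apply_ne _ hij, if_neg hij]
    have hsum : ∑ a, (starRingEnd ℂ) (B a i) * B a j = if i = j then (d i : ℂ) else 0 := by
      rw [← hentry, Matrix.mul_apply]
      simp [Matrix.conjTranspose_apply]
    simp only [PiLp.inner_apply, RCLike.inner_apply, hudef, WithLp.equiv_symm_apply, PiLp.toLp_apply]
    calc ∑ a, (((Real.sqrt (d j) : ℂ))⁻¹ * B a j)
          * (starRingEnd ℂ) (((Real.sqrt (d i) : ℂ))⁻¹ * B a i)
        = ((Real.sqrt (d i) : ℂ))⁻¹ * ((Real.sqrt (d j) : ℂ))⁻¹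
          * ∑ a, (starRingEnd ℂ) (B a i) * B a j := by
          rw [Finset.mul_sum]
          refine Finset.sum_congr rfl fun a _ => ?_
          rw [_root_.map_mul, map_inv₀, Complex.conj_ofReal]
          ring
      _ = _ := by rw [hsum]
  have hON : Orthonormal ℂ (Set.restrict {i | d i ≠ 0} u) := by
    rw [orthonormal_iff_ite]
    rintro ⟨i, hi⟩ ⟨j, hj⟩
    change inner ℂ (u i) (u j) = _
    rw [hinner i j]
    by_cases hij : i = j
    · subst hij
      rw [if_pos rfl, if_pos (Subtype.ext rfl)]
      have hd : (0:ℝ) < d i := lt_of_le_of_ne (hdnn i) (Ne.symm hi)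
      have hs : ((Real.sqrt (d i) : ℝ) : ℂ) ≠ 0 := by
        simpa using (Real.sqrt_ne_zero'.mpr hd)
      field_simp
      rw [← Complex.ofReal_pow, Real.sq_sqrt (hdnn i)]
    · rw [if_neg hij, if_neg (by simpa [Subtype.ext_iff] using hij)]
      ring
  have hcard : Module.finrank ℂ (EuclideanSpace ℂ (Fin n)) = Fintype.card (Fin n) := by
    simp
  obtain ⟨b, hb⟩ := hON.exists_orthonormalBasis_extension_of_card_eq hcard
  set U₁ : Matrix (Fin n) (Fin n) ℂ := Matrix.of (fun a i => b i a) with hU₁def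
  have hU₁mem : U₁ ∈ Matrix.unitaryGroup (Fin n) ℂ := by
    rw [Matrix.mem_unitaryGroup_iff']
    ext i j
    have hbij := orthonormal_iff_ite.mp b.orthonormal i j
    simp only [PiLp.inner_apply, RCLike.inner_apply] at hbij
    simp only [Matrix.mul_apply, Matrix.star_eq_conjTranspose, Matrix.conjTranspose_apply,
      hU₁def, Matrix.of_apply, Matrix.one_apply]
    rw [← hbij]
    refine Finset.sum_congr rfl fun _ _ => ?_
    rw [mul_comm]
    rfl
  have hBU : B = U₁ * diagonal ((↑) ∘ Real.sqrt ∘ d) := by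
    ext a i
    rw [Matrix.mul_diagonal]
    by_cases hdi : d i = 0
    · have hBcol : B a i = 0 := by
        have h0 : (Bᴴ * B) i i = 0 := by
          rw [hBB]; simp [Matrix.diagonal_apply, RCLike.ofReal, hdi]
        have hsum : ∑ c, (Complex.normSq (B c i) : ℂ) = 0 := by
          rw [← h0, Matrix.mul_apply]
          refine Finset.sum_congr rfl fun c _ => ?_
          rw [Matrix.conjTranspose_apply, Complex.star_def, ← Complex.normSq_eq_conj_mul_self]
        have hsumR : ∑ c, Complex.normSq (B c i) = 0 := by
          have h' : ((∑ c, Complex.normSq (B c i) : ℝ) : ℂ) = 0 := by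
            push_cast
            exact hsum
          exact_mod_cast h'
        have := (Finset.sum_eq_zero_iff_of_nonneg
          (fun c _ => Complex.normSq_nonneg (B c i))).mp hsumR a (Finset.mem_univ a)
        exact Complex.normSq_eq_zero.mp this
      simp [hBcol, hdi]
    · have hbi : b i = u i := hb i hdi
      have : U₁ a i = ((Real.sqrt (d i) : ℂ))⁻¹ * B a i := by
        rw [hU₁def, Matrix.of_apply, hbi, hudef]
        rfl
      rw [this, Function.comp_apply, Function.comp_apply]
      have hd : (0:ℝ) < d i := lt_of_le_of_ne (hdnn i) (Ne.symm hdi)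
      have hs : (Real.sqrt (d i) : ℂ) ≠ 0 := by
        simpa using (Real.sqrt_ne_zero'.mpr hd)
      field_simp
  refine ⟨U₁ * star V, mul_mem hU₁mem (Unitary.star_mem hVmem), ?_⟩
  have hsqrt : P = (Matrix.posSemidef_conjTranspose_mul_self A).sqrt :=
    hPps.eq_sqrt_of_sq_eq (Matrix.posSemidef_conjTranspose_mul_self A) hPsq
  rw [← hsqrt, hPdef]
  have h2 : U₁ * star V * (V * diagonal ((↑) ∘ Real.sqrt ∘ d) * star V)
      = U₁ * ((star V * V) * (diagonal ((↑) ∘ Real.sqrt ∘ d) * star V)) := by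
    simp only [Matrix.mul_assoc]
  rw [h2, hVV', Matrix.one_mul, ← Matrix.mul_assoc, ← hBU, hBdef, Matrix.mul_assoc, hVV,
    Matrix.mul_one]

/-- Purifications have norm one when the reduced matrix has trace one. -/
lemma norm_eq_one_of_purifies {n : ℕ} (x : EuclideanSpace ℂ (Fin n × Fin n))
    (M : Matrix (Fin n) (Fin n) ℂ)
    (hpur : ∀ a a' : Fin n, ∑ b : Fin n, x (a, b) * starRingEnd ℂ (x (a', b)) = M a a')
    (htr : M.trace = 1) : ‖x‖ = 1 := by
  rw [EuclideanSpace.norm_eq]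
  have h1 : ∀ a : Fin n, ∑ b : Fin n, ‖x (a, b)‖ ^ 2 = (M a a).re := by
    intro a
    have h2 := congrArg Complex.re (hpur a a)
    rw [Complex.re_sum] at h2
    rw [← h2]
    refine Finset.sum_congr rfl fun c _ => ?_
    rw [Complex.mul_conj, Complex.ofReal_re, ← Complex.sq_norm]
  have hsum : ∑ p : Fin n × Fin n, ‖x p‖ ^ 2 = 1 := by
    rw [Fintype.sum_prod_type]
    calc ∑ a : Fin n, ∑ b : Fin n, ‖x (a, b)‖ ^ 2
        = ∑ a : Fin n, (M a a).re := Finset.sum_congr rfl fun a _ => h1 a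
      _ = (M.trace).re := by rw [Matrix.trace, Complex.re_sum]; rfl
      _ = 1 := by rw [htr, Complex.one_re]
  rw [hsum, Real.sqrt_one]

set_option maxHeartbeats 1000000 in
/-- Uhlmann achievability of the fidelity: any two density matrices `ρ, σ` admit
purifications `ψ, φ` whose overlap achieves the fidelity: `|⟨ψ, φ⟩| = F(ρ, σ)`. -/
theorem uhlmann_fidelity_achievable {n : ℕ}
    {ρ σ : Matrix (Fin n) (Fin n) ℂ}
    (hρ : ρ.PosSemidef) (hρtr : ρ.trace = 1)
    (hσ : σ.PosSemidef) (hσtr : σ.trace = 1) :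
    ∃ ψ φ : EuclideanSpace ℂ (Fin n × Fin n),
      ‖ψ‖ = 1 ∧ ‖φ‖ = 1 ∧
      (∀ a a' : Fin n, ∑ b : Fin n, ψ (a, b) * starRingEnd ℂ (ψ (a', b)) = ρ a a') ∧
      (∀ a a' : Fin n, ∑ b : Fin n, φ (a, b) * starRingEnd ℂ (φ (a', b)) = σ a a') ∧
      ‖(inner ℂ ψ φ : ℂ)‖ = fidelity hρ hσ := by
  classical
  set M : Matrix (Fin n) (Fin n) ℂ := hσ.sqrt * hρ.sqrt with hMdef
  obtain ⟨U, hUmem, hUeq⟩ := exists_unitary_polar M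
  set T : Matrix (Fin n) (Fin n) ℂ := (sqrt_mul_mul_sqrt_posSemidef hρ hσ).sqrt with hTdef
  have hT : T.PosSemidef := (sqrt_mul_mul_sqrt_posSemidef hρ hσ).posSemidef_sqrt
  have heq : Mᴴ * M = hρ.sqrt * σ * hρ.sqrt := by
    rw [hMdef, conjTranspose_mul, hρ.posSemidef_sqrt.isHermitian.eq,
      hσ.posSemidef_sqrt.isHermitian.eq, Matrix.mul_assoc, ← Matrix.mul_assoc hσ.sqrt,
      hσ.sqrt_mul_self, ← Matrix.mul_assoc]
  have hTs : (Matrix.posSemidef_conjTranspose_mul_self M).sqrt = T := by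
    refine (Matrix.posSemidef_conjTranspose_mul_self M).posSemidef_sqrt.eq_sqrt_of_sq_eq
      (sqrt_mul_mul_sqrt_posSemidef hρ hσ) ?_
    rw [pow_two, (Matrix.posSemidef_conjTranspose_mul_self M).sqrt_mul_self, heq]
  rw [hTs] at hUeq
  -- `hUeq : M = U * T`, i.e. `√σ √ρ = U T`
  have hUU : U * star U = 1 := (Matrix.mem_unitaryGroup_iff).mp hUmem
  have hUU' : star U * U = 1 := (Matrix.mem_unitaryGroup_iff').mp hUmem
  set F : Matrix (Fin n) (Fin n) ℂ := hσ.sqrt * U with hFdef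
  set ψ : EuclideanSpace ℂ (Fin n × Fin n) :=
    (WithLp.equiv 2 (Fin n × Fin n → ℂ)).symm (fun p => hρ.sqrt p.1 p.2) with hψdef
  set φ : EuclideanSpace ℂ (Fin n × Fin n) :=
    (WithLp.equiv 2 (Fin n × Fin n → ℂ)).symm (fun p => F p.1 p.2) with hφdef
  have hψapp : ∀ a c : Fin n, ψ (a, c) = hρ.sqrt a c := fun a c => rfl
  have hφapp : ∀ a c : Fin n, φ (a, c) = F a c := fun a c => rfl
  have hψpur : ∀ a a' : Fin n, ∑ c : Fin n, ψ (a, c) * starRingEnd ℂ (ψ (a', c)) = ρ a a' := by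
    intro a a'
    have h1 : (hρ.sqrt * hρ.sqrtᴴ) a a' = ρ a a' := by
      rw [hρ.posSemidef_sqrt.isHermitian.eq, hρ.sqrt_mul_self]
    rw [← h1, Matrix.mul_apply]
    simp [Matrix.conjTranspose_apply, hψapp]
  have hφpur : ∀ a a' : Fin n, ∑ c : Fin n, φ (a, c) * starRingEnd ℂ (φ (a', c)) = σ a a' := by
    intro a a'
    have hFF : F * Fᴴ = σ := by
      rw [hFdef, conjTranspose_mul, hσ.posSemidef_sqrt.isHermitian.eq, Matrix.mul_assoc,
        ← Matrix.mul_assoc U, ← Matrix.star_eq_conjTranspose, hUU, Matrix.one_mul,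
        hσ.sqrt_mul_self]
    have h1 : (F * Fᴴ) a a' = σ a a' := by rw [hFF]
    rw [← h1, Matrix.mul_apply]
    simp [Matrix.conjTranspose_apply, hφapp]
  have hinner : (inner ℂ ψ φ : ℂ) = T.trace := by
    have hrF : hρ.sqrt * F = T := by
      have hMT : hρ.sqrt * hσ.sqrt = T * star U := by
        have := congrArg Matrix.conjTranspose hUeq
        rw [hMdef, conjTranspose_mul, conjTranspose_mul, hρ.posSemidef_sqrt.isHermitian.eq,
          hσ.posSemidef_sqrt.isHermitian.eq, hT.isHermitian.eq,
          ← Matrix.star_eq_conjTranspose] at this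
        exact this
      rw [hFdef, ← Matrix.mul_assoc, hMT, Matrix.mul_assoc, hUU', Matrix.mul_one]
    rw [PiLp.inner_apply]
    simp only [RCLike.inner_apply]
    calc ∑ p : Fin n × Fin n, φ p * (starRingEnd ℂ) (ψ p)
        = ∑ a : Fin n, ∑ c : Fin n, (starRingEnd ℂ) (hρ.sqrt a c) * F a c := by
          rw [Fintype.sum_prod_type]
          exact Finset.sum_congr rfl fun a _ => Finset.sum_congr rfl fun c _ => by
            rw [hψapp, hφapp, mul_comm]
      _ = ∑ a : Fin n, ∑ c : Fin n, hρ.sqrt c a * F a c := by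
          refine Finset.sum_congr rfl fun a _ => Finset.sum_congr rfl fun c _ => ?_
          congr 1
          have := congrFun (congrFun hρ.posSemidef_sqrt.isHermitian.eq c) a
          rw [Matrix.conjTranspose_apply] at this
          exact this
      _ = ∑ c : Fin n, ∑ a : Fin n, hρ.sqrt c a * F a c := Finset.sum_comm
      _ = ∑ c : Fin n, (hρ.sqrt * F) c c := by
          refine Finset.sum_congr rfl fun c _ => ?_
          rw [Matrix.mul_apply]
      _ = T.trace := by rw [hrF]; rfl
  have htrnn : (0:ℂ) ≤ T.trace := by
    exact hT.trace_nonneg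
  have him : (T.trace).im = 0 := ((Complex.nonneg_iff.mp htrnn).2).symm
  have hre : 0 ≤ (T.trace).re := (Complex.nonneg_iff.mp htrnn).1
  refine ⟨ψ, φ, norm_eq_one_of_purifies ψ ρ hψpur hρtr,
    norm_eq_one_of_purifies φ σ hφpur hσtr, hψpur, hφpur, ?_⟩
  rw [hinner]
  have hz : T.trace = ((T.trace).re : ℂ) := Complex.ext rfl (by simp [him])
  rw [fidelity, ← hTdef, hz, Complex.norm_real, Real.norm_eq_abs, abs_of_nonneg hre, Complex.ofReal_re]
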